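/- Let E be a measurable space, let X₁,…,X_{N₀}, X_{N₀+1} be independent, identically distributed E-valued random variables with common law μ, fix α ∈ (0,1) and L a positive integer, and let σ₁,…,σ_L : E → ℝ be measurable score functions such that for each l the pushforward of μ under σ_l is atomless. Define recursively k_l = ⌊α(N_{l−1}+1)⌋ and N_l = N_{l−1} − k_l for l = 1,…,L, and define thresholds iteratively: W₀ = {1,…,N₀}; for l = 1,…,L, if k_l ≥ 1 let t_l be the k_l-th smallest value among {σ_l(X_i) : i ∈ W_{l−1}} and let W_l be W_{l−1} with the k_l indices attaining those smallest values removed (almost surely well-defined since ties have probability zero), and if k_l = 0 set t_l = −∞ and W_l = W_{l−1}. Then P( σ_l(X_{N₀+1}) ≥ t_l for all l = 1,…,L ) = 1 − (Σ_{l=1}^L k_l)/(N₀+1). -/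

import Mathlib

set_option linter.unusedSectionVars false


open MeasureTheory ProbabilityTheory Finset

noncomputable section

/-- The `k`-th smallest value (1-indexed) attained by `f` on the finite index set `s`
(counted with multiplicity). -/
def kthSmallestVal {ι : Type*} (s : Finset ι) (f : ι → ℝ) (k : ℕ) : ℝ :=
  ((s.val.map f).sort (· ≤ ·)).getD (k - 1) 0

/-- Remove from `s` the `k` indices attaining the smallest values of `f`
(ties, which are almost surely absent, broken by the index order). -/
def removeKSmallest {ι : Type*} [LinearOrder ι] (s : Finset ι) (f : ι → ℝ) (k : ℕ) : Finset ι :=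
  s.filter (fun i => k < (s.filter (fun j => f j < f i ∨ (f j = f i ∧ j ≤ i))).card)

/-- The iteratively pruned index sets: `W_0` is everything, and `W_l` is `W_{l-1}` with the
`k_l` indices attaining the smallest values of `f l` removed. -/
def pruneSeq {ι : Type*} [LinearOrder ι] [Fintype ι] (f : ℕ → ι → ℝ) (k : ℕ → ℕ) :
    ℕ → Finset ι
  | 0 => Finset.univ
  | l + 1 => removeKSmallest (pruneSeq f k l) (f (l + 1)) (k (l + 1))

/-- count of elements of `s` with value `≤ v`. -/
def cntLE {ι : Type*} (s : Finset ι) (f : ι → ℝ) (v : ℝ) : ℕ :=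
  (s.filter (fun j => f j ≤ v)).card

section Comb

variable {ι : Type*} [LinearOrder ι] {s : Finset ι} {f : ι → ℝ} {k : ℕ} {v : ℝ}

lemma card_filter_comp (hf : Set.InjOn f s) (p : ℝ → Prop) [DecidablePred p] :
    (s.filter (fun j => p (f j))).card = ((s.image f).filter p).card := by
  classical
  rw [Finset.filter_image,
    Finset.card_image_of_injOn (hf.mono (by exact_mod_cast Finset.filter_subset _ s))]

lemma cntLE_image (hf : Set.InjOn f s) : cntLE s f v = ((s.image f).filter (· ≤ v)).card :=
  card_filter_comp hf (fun t => t ≤ v)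

-- counting in a `Finset ℝ` via `orderEmbOfFin`
lemma filter_le_orderEmb (T : Finset ℝ) (j : Fin T.card) :
    T.filter (· ≤ T.orderEmbOfFin rfl j) = (Finset.Iic j).image (T.orderEmbOfFin rfl) := by
  ext t
  simp only [Finset.mem_filter, Finset.mem_image, Finset.mem_Iic]
  constructor
  · rintro ⟨htT, hle⟩
    obtain ⟨m, rfl⟩ : ∃ m, T.orderEmbOfFin rfl m = t := by
      have : t ∈ Set.range (T.orderEmbOfFin rfl) := by
        rw [Finset.range_orderEmbOfFin]; exact_mod_cast htT
      exact this
    exact ⟨m, (T.orderEmbOfFin rfl).le_iff_le.mp hle, rfl⟩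
  · rintro ⟨m, hm, rfl⟩
    exact ⟨Finset.orderEmbOfFin_mem _ _ _, (T.orderEmbOfFin rfl).le_iff_le.mpr hm⟩

lemma card_filter_le_orderEmb (T : Finset ℝ) (j : Fin T.card) :
    (T.filter (· ≤ T.orderEmbOfFin rfl j)).card = (j : ℕ) + 1 := by
  rw [filter_le_orderEmb, Finset.card_image_of_injective _ (T.orderEmbOfFin rfl).injective,
    Fin.card_Iic]

lemma filter_lt_orderEmb (T : Finset ℝ) (j : Fin T.card) :
    T.filter (· < T.orderEmbOfFin rfl j) = (Finset.Iio j).image (T.orderEmbOfFin rfl) := by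
  ext t
  simp only [Finset.mem_filter, Finset.mem_image, Finset.mem_Iio]
  constructor
  · rintro ⟨htT, hle⟩
    obtain ⟨m, rfl⟩ : ∃ m, T.orderEmbOfFin rfl m = t := by
      have : t ∈ Set.range (T.orderEmbOfFin rfl) := by
        rw [Finset.range_orderEmbOfFin]; exact_mod_cast htT
      exact this
    exact ⟨m, (T.orderEmbOfFin rfl).lt_iff_lt.mp hle, rfl⟩
  · rintro ⟨m, hm, rfl⟩
    exact ⟨Finset.orderEmbOfFin_mem _ _ _, (T.orderEmbOfFin rfl).lt_iff_lt.mpr hm⟩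

lemma card_filter_lt_orderEmb (T : Finset ℝ) (j : Fin T.card) :
    (T.filter (· < T.orderEmbOfFin rfl j)).card = (j : ℕ) := by
  rw [filter_lt_orderEmb, Finset.card_image_of_injective _ (T.orderEmbOfFin rfl).injective,
    Fin.card_Iio]

lemma sort_map_eq (hf : Set.InjOn f s) :
    (s.val.map f).sort (· ≤ ·) = (s.image f).sort (· ≤ ·) := by
  classical
  rw [← Finset.sort_val]
  congr 1
  rw [Finset.image_val, Multiset.dedup_eq_self.mpr]
  exact Multiset.Nodup.map_on (fun x hx y hy => hf hx hy) s.nodup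

lemma kthSmallestVal_eq_orderEmb (hf : Set.InjOn f s) (hk : 1 ≤ k) (hks : k ≤ s.card) :
    kthSmallestVal s f k =
      (s.image f).orderEmbOfFin rfl ⟨k - 1, by
        rw [Finset.card_image_of_injOn hf]; omega⟩ := by
  classical
  have hcard : (s.image f).card = s.card := Finset.card_image_of_injOn hf
  rw [kthSmallestVal, sort_map_eq hf]
  rw [List.getD_eq_getElem _ _ (by rw [Finset.length_sort, hcard]; omega)]
  rw [Finset.orderEmbOfFin_apply]
  rfl

lemma kthSmallestVal_le_iff (hf : Set.InjOn f s) (hk : 1 ≤ k) (hks : k ≤ s.card) :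
    kthSmallestVal s f k ≤ v ↔ k ≤ cntLE s f v := by
  classical
  have hcard : (s.image f).card = s.card := Finset.card_image_of_injOn hf
  set T := s.image f with hT
  set j : Fin T.card := ⟨k - 1, by rw [hcard]; omega⟩ with hj
  rw [kthSmallestVal_eq_orderEmb hf hk hks, cntLE_image hf]
  constructor
  · intro hle
    calc k = (j : ℕ) + 1 := by have : (j : ℕ) = k - 1 := rfl; omega
    _ = (T.filter (· ≤ T.orderEmbOfFin rfl j)).card := (card_filter_le_orderEmb T j).symm
    _ ≤ (T.filter (· ≤ v)).card := by
        apply Finset.card_le_card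
        exact Finset.monotone_filter_right _ (fun t _ ht => le_trans ht hle)
  · intro hcnt
    have hcnt' : k ≤ (T.filter (fun t => t ≤ v)).card := hcnt
    clear hcnt
    by_contra hlt
    push_neg at hlt
    have hsub : T.filter (· ≤ v) ⊆ T.filter (· < T.orderEmbOfFin rfl j) :=
      Finset.monotone_filter_right _ (fun t _ ht => lt_of_le_of_lt ht hlt)
    have := Finset.card_le_card hsub
    rw [card_filter_lt_orderEmb] at this
    have hjv : (j : ℕ) = k - 1 := rfl
    omega

lemma mem_removeKSmallest_iff (hf : Set.InjOn f s) {i : ι} :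
    i ∈ removeKSmallest s f k ↔ i ∈ s ∧ k < cntLE s f (f i) := by
  classical
  rw [removeKSmallest, Finset.mem_filter]
  have hfil : ∀ i' ∈ s, (s.filter (fun j => f j < f i' ∨ (f j = f i' ∧ j ≤ i')))
      = s.filter (fun j => f j ≤ f i') := by
    intro i' hi'
    apply Finset.filter_congr
    intro j hj
    constructor
    · rintro (h | ⟨h, _⟩)
      · exact le_of_lt h
      · exact le_of_eq h
    · intro h
      rcases lt_or_eq_of_le h with h' | h'
      · exact Or.inl h'
      · exact Or.inr ⟨h', le_of_eq (hf hj hi' h')⟩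
  constructor
  · rintro ⟨hi, hcard⟩
    exact ⟨hi, by rw [cntLE, ← hfil i hi]; exact hcard⟩
  · rintro ⟨hi, hcard⟩
    exact ⟨hi, by rw [hfil i hi]; exact hcard⟩

lemma removeKSmallest_subset : removeKSmallest s f k ⊆ s := Finset.filter_subset _ _

lemma removeKSmallest_zero : removeKSmallest s f 0 = s := by
  classical
  ext i
  simp only [removeKSmallest, Finset.mem_filter, and_iff_left_iff_imp]
  intro hi
  rw [Finset.card_pos]
  exact ⟨i, Finset.mem_filter.mpr ⟨hi, Or.inr ⟨rfl, le_refl _⟩⟩⟩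

lemma card_removeKSmallest (hf : Set.InjOn f s) (hks : k ≤ s.card) :
    (removeKSmallest s f k).card = s.card - k := by
  classical
  have hrw : removeKSmallest s f k = s.filter (fun i => k < cntLE s f (f i)) := by
    ext i; rw [mem_removeKSmallest_iff hf, Finset.mem_filter]
  have hcard : (s.image f).card = s.card := Finset.card_image_of_injOn hf
  set T := s.image f with hT
  have hcnt : ∀ i ∈ s, cntLE s f (f i) = (T.filter (· ≤ f i)).card := fun i _ => cntLE_image hf
  rw [hrw]
  have : (s.filter (fun i => k < cntLE s f (f i))).card
      = (T.filter (fun t => k < (T.filter (· ≤ t)).card)).card := by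
    rw [← card_filter_comp hf (fun t => k < (T.filter (· ≤ t)).card)]
    congr 1
    apply Finset.filter_congr
    intro i hi
    rw [cntLE_image hf]
  rw [this]
  have himg : T.filter (fun t => k < (T.filter (· ≤ t)).card)
      = (Finset.univ.filter (fun m : Fin T.card => k < (m : ℕ) + 1)).image
          (T.orderEmbOfFin rfl) := by
    ext t
    simp only [Finset.mem_filter, Finset.mem_image, Finset.mem_univ, true_and]
    constructor
    · rintro ⟨htT, hgt⟩
      obtain ⟨m, rfl⟩ : ∃ m, T.orderEmbOfFin rfl m = t := by
        have : t ∈ Set.range (T.orderEmbOfFin rfl) := by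
          rw [Finset.range_orderEmbOfFin]; exact_mod_cast htT
        exact this
      rw [card_filter_le_orderEmb] at hgt
      exact ⟨m, hgt, rfl⟩
    · rintro ⟨m, hm, rfl⟩
      exact ⟨Finset.orderEmbOfFin_mem _ _ _, by rw [card_filter_le_orderEmb]; exact hm⟩
  rw [himg, Finset.card_image_of_injective _ (T.orderEmbOfFin rfl).injective]
  have : (Finset.univ.filter (fun m : Fin T.card => k < (m : ℕ) + 1)).card
      = T.card - k := by
    rcases Nat.lt_or_ge k T.card with hlt | hge
    · have : (Finset.univ.filter (fun m : Fin T.card => k < (m : ℕ) + 1))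
          = Finset.Ici (⟨k, hlt⟩ : Fin T.card) := by
        ext m
        simp only [Finset.mem_filter, Finset.mem_univ, true_and, Finset.mem_Ici, Fin.le_def]
        omega
      rw [this, Fin.card_Ici]
    · have hk' : k ≤ s.card := hks
      have hkT : k = T.card := by omega
      have : (Finset.univ.filter (fun m : Fin T.card => k < (m : ℕ) + 1)) = ∅ := by
        ext m
        simp only [Finset.mem_filter, Finset.mem_univ, true_and, Finset.notMem_empty, iff_false]
        have := m.isLt; omega
      rw [this]
      simp [hkT]
  rw [this, hcard]

end Comb

section Prune

lemma removeKSmallest_equiv {ι : Type*} [LinearOrder ι] (e : ι ≃ ι)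
    (s : Finset ι) (f : ι → ℝ) (k : ℕ) (hf : Set.InjOn f s) :
    removeKSmallest (s.image e.symm) (fun i => f (e i)) k
      = (removeKSmallest s f k).image e.symm := by
  classical
  have hmem : ∀ (t : Finset ι) (i : ι), i ∈ t.image e.symm ↔ e i ∈ t := by
    intro t i
    simp [Finset.mem_image, Equiv.symm_apply_eq]
  have hinj' : Set.InjOn (fun i => f (e i)) (s.image e.symm) := by
    intro i1 h1 i2 h2 hEq
    rw [Finset.coe_image] at h1 h2
    have h1' : e i1 ∈ s := by
      rcases h1 with ⟨a, ha, rfl⟩; simpa using ha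
    have h2' : e i2 ∈ s := by
      rcases h2 with ⟨a, ha, rfl⟩; simpa using ha
    exact e.injective (hf h1' h2' hEq)
  have hcnt : ∀ w, cntLE (s.image e.symm) (fun i => f (e i)) w = cntLE s f w := by
    intro w
    rw [cntLE, cntLE]
    have : (s.image e.symm).filter (fun j => f (e j) ≤ w)
        = (s.filter (fun j => f j ≤ w)).image e.symm := by
      ext i
      rw [hmem, Finset.mem_filter, Finset.mem_filter, hmem]
    rw [this, Finset.card_image_of_injective _ e.symm.injective]
  ext i
  rw [mem_removeKSmallest_iff hinj', hmem, hcnt, hmem (removeKSmallest s f k) i,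
    mem_removeKSmallest_iff hf]

lemma removeKSmallest_equiv_mem {ι : Type*} [LinearOrder ι] (e : ι ≃ ι)
    (s s' : Finset ι) (hs' : ∀ i, i ∈ s' ↔ e i ∈ s) (f : ι → ℝ) (k : ℕ)
    (hf : Set.InjOn f s) (i : ι) :
    i ∈ removeKSmallest s' (fun i => f (e i)) k ↔ e i ∈ removeKSmallest s f k := by
  classical
  have hmem : ∀ (t : Finset ι) (i : ι), i ∈ t.image e.symm ↔ e i ∈ t := by
    intro t i
    simp [Finset.mem_image, Equiv.symm_apply_eq]
  have hss : s' = s.image e.symm := by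
    ext j; rw [hs', hmem]
  rw [hss, removeKSmallest_equiv e s f k hf, hmem]

lemma pruneSeq_equiv {ι : Type*} [LinearOrder ι] [Fintype ι] {L : ℕ} (e : ι ≃ ι)
    (F : ℕ → ι → ℝ) (k : ℕ → ℕ)
    (hinj : ∀ m ∈ Finset.Icc 1 L, Function.Injective (F m)) :
    ∀ l ≤ L, ∀ i, i ∈ pruneSeq (fun m i => F m (e i)) k l ↔ e i ∈ pruneSeq F k l := by
  intro l
  induction l with
  | zero =>
    intro _ i
    rw [pruneSeq, pruneSeq]
    simp
  | succ l ih =>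
    intro hl i
    rw [pruneSeq, pruneSeq]
    exact removeKSmallest_equiv_mem e _ _ (ih (by omega)) _ _
      ((hinj (l+1) (Finset.mem_Icc.mpr ⟨by omega, hl⟩)).injOn) i

lemma card_pruneSeq {ι : Type*} [LinearOrder ι] [Fintype ι] (F : ℕ → ι → ℝ) (k : ℕ → ℕ)
    (L : ℕ) (hinj : ∀ m ∈ Finset.Icc 1 L, Function.Injective (F m))
    (hsum : ∑ m ∈ Finset.Icc 1 L, k m ≤ Fintype.card ι) :
    ∀ l ≤ L, (pruneSeq F k l).card + ∑ m ∈ Finset.Icc 1 l, k m = Fintype.card ι := by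
  intro l
  induction l with
  | zero =>
    intro _
    show (Finset.univ : Finset ι).card + _ = _
    simp
  | succ l ih =>
    intro hl
    have IH := ih (by omega)
    have hmono : ∑ m ∈ Finset.Icc 1 (l+1), k m ≤ ∑ m ∈ Finset.Icc 1 L, k m :=
      Finset.sum_le_sum_of_subset (Finset.Icc_subset_Icc_right hl)
    have hsucc : ∑ m ∈ Finset.Icc 1 (l+1), k m = (∑ m ∈ Finset.Icc 1 l, k m) + k (l+1) :=
      Finset.sum_Icc_succ_top (by omega) _
    have hkb : k (l+1) ≤ (pruneSeq F k l).card := by omega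
    show (removeKSmallest (pruneSeq F k l) (F (l+1)) (k (l+1))).card + _ = _
    rw [card_removeKSmallest
      ((hinj (l+1) (Finset.mem_Icc.mpr ⟨by omega, hl⟩)).injOn) hkb]
    omega

end Prune

section Main

lemma prune_main {N0 L : ℕ} (F : ℕ → Fin (N0+1) → ℝ)
    (hinj : ∀ m ∈ Finset.Icc 1 L, Function.Injective (F m))
    (k : ℕ → ℕ) (hsum : ∑ m ∈ Finset.Icc 1 L, k m ≤ N0) :
    ∀ M, M ≤ L →
      ((Fin.last N0 ∈ pruneSeq F k M ↔
        ∀ l ∈ Finset.Icc 1 M, (k l = 0 ∨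
          kthSmallestVal (pruneSeq (fun m (i : Fin N0) => F m i.castSucc) k (l-1))
            (fun (i : Fin N0) => F l i.castSucc) (k l) ≤ F l (Fin.last N0)))
      ∧ (Fin.last N0 ∈ pruneSeq F k M →
          pruneSeq F k M
            = (pruneSeq (fun m (i : Fin N0) => F m i.castSucc) k M).image Fin.castSucc
              ∪ {Fin.last N0})) := by
  have hfinj : ∀ m ∈ Finset.Icc 1 L, Function.Injective (fun (i : Fin N0) => F m i.castSucc) :=
    fun m hm => (hinj m hm).comp (Fin.castSucc_injective _)
  have cardW : ∀ l ≤ L, (pruneSeq (fun m (i : Fin N0) => F m i.castSucc) k l).card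
      + ∑ m ∈ Finset.Icc 1 l, k m = N0 := by
    intro l hl
    have := card_pruneSeq (fun m (i : Fin N0) => F m i.castSucc) k L hfinj
      (by simpa using hsum) l hl
    simpa using this
  intro M
  induction M with
  | zero =>
    intro _
    constructor
    · rw [pruneSeq]
      simp
    · intro _
      rw [pruneSeq, pruneSeq]
      ext i
      simp only [Finset.mem_univ, true_iff, Finset.mem_union, Finset.mem_image,
        Finset.mem_singleton]
      rcases Fin.eq_castSucc_or_eq_last i with ⟨j, rfl⟩ | rfl
      · exact Or.inl ⟨j, trivial, rfl⟩
      · exact Or.inr rfl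
  | succ M ih =>
    intro hML
    obtain ⟨hiff, heq⟩ := ih (by omega)
    set fc : ℕ → Fin N0 → ℝ := fun m i => F m i.castSucc with hfc
    set W := pruneSeq fc k M with hWdef
    set W' := pruneSeq F k M with hW'def
    have hIcc : ∀ (Q : ℕ → Prop), (∀ l ∈ Finset.Icc 1 (M+1), Q l) ↔
        ((∀ l ∈ Finset.Icc 1 M, Q l) ∧ Q (M+1)) := by
      intro Q
      constructor
      · intro h
        refine ⟨fun l hl => ?_, h (M+1) (Finset.mem_Icc.mpr ⟨by omega, le_refl _⟩)⟩
        rcases Finset.mem_Icc.mp hl with ⟨ha, hb⟩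
        exact h l (Finset.mem_Icc.mpr ⟨ha, by omega⟩)
      · rintro ⟨h1, h2⟩ l hl
        rcases Finset.mem_Icc.mp hl with ⟨ha, hb⟩
        rcases Nat.lt_or_ge l (M+1) with hc | hc
        · exact h1 l (Finset.mem_Icc.mpr ⟨ha, by omega⟩)
        · have : l = M + 1 := by omega
          subst this; exact h2
    have hstep' : pruneSeq F k (M+1) = removeKSmallest W' (F (M+1)) (k (M+1)) := by
      rw [hW'def, pruneSeq]
    have hstepc : pruneSeq fc k (M+1) = removeKSmallest W (fc (M+1)) (k (M+1)) := by
      rw [hWdef, pruneSeq]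
    by_cases hk0 : k (M+1) = 0
    · constructor
      · rw [hstep', hk0, removeKSmallest_zero, hIcc]
        constructor
        · intro h
          exact ⟨hiff.mp h, Or.inl hk0⟩
        · rintro ⟨h1, _⟩
          exact hiff.mpr h1
      · intro hmem
        rw [hstep', hk0, removeKSmallest_zero] at hmem ⊢
        rw [hstepc, hk0, removeKSmallest_zero]
        exact heq hmem
    · have hk1 : 1 ≤ k (M+1) := by omega
      have hsumM : (∑ m ∈ Finset.Icc 1 M, k m) + k (M+1) ≤ N0 := by
        have h1 : ∑ m ∈ Finset.Icc 1 (M+1), k m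
            = (∑ m ∈ Finset.Icc 1 M, k m) + k (M+1) :=
          Finset.sum_Icc_succ_top (by omega) _
        have h2 : ∑ m ∈ Finset.Icc 1 (M+1), k m ≤ ∑ m ∈ Finset.Icc 1 L, k m :=
          Finset.sum_le_sum_of_subset (Finset.Icc_subset_Icc_right hML)
        omega
      have hWcard : W.card + ∑ m ∈ Finset.Icc 1 M, k m = N0 := cardW M (by omega)
      have hκW : k (M+1) ≤ W.card := by omega
      have hMmem : M + 1 ∈ Finset.Icc 1 L := Finset.mem_Icc.mpr ⟨by omega, hML⟩
      have hginj : Function.Injective (F (M+1)) := hinj (M+1) hMmem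
      have hfcinj : Set.InjOn (fc (M+1)) W := (hfinj (M+1) hMmem).injOn
      set v := F (M+1) (Fin.last N0) with hv
      by_cases hlast : Fin.last N0 ∈ W'
      · have hW' := heq hlast
        have hsplit : ∀ w, cntLE W' (F (M+1)) w
            = cntLE W (fc (M+1)) w + (if v ≤ w then 1 else 0) := by
          intro w
          classical
          rw [cntLE, cntLE, hW', Finset.filter_union, Finset.filter_image,
            Finset.filter_singleton]
          have hdisj : Disjoint
              ((W.filter (fun a => F (M+1) a.castSucc ≤ w)).image Fin.castSucc)
              (if v ≤ w then ({Fin.last N0} : Finset (Fin (N0+1))) else ∅) := by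
            split_ifs
            · rw [Finset.disjoint_singleton_right]
              simp only [Finset.mem_image]
              rintro ⟨a, _, ha⟩
              exact Fin.ne_of_lt (Fin.castSucc_lt_last a) ha
            · exact Finset.disjoint_empty_right _
          rw [Finset.card_union_of_disjoint hdisj,
            Finset.card_image_of_injective _ (Fin.castSucc_injective _)]
          split_ifs <;> simp <;> rfl
        have hlast_mem_iff : ∀ κ', (Fin.last N0 ∈ removeKSmallest W' (F (M+1)) κ'
            ↔ κ' < cntLE W (fc (M+1)) v + 1) := by
          intro κ'
          rw [mem_removeKSmallest_iff hginj.injOn]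
          have hs := hsplit v
          simp only [le_refl, if_true] at hs
          constructor
          · rintro ⟨_, h⟩
            rw [← hs]; exact h
          · intro h
            exact ⟨hlast, by rw [hs]; exact h⟩
        have hpass_iff : (kthSmallestVal W (fc (M+1)) (k (M+1)) ≤ v
            ↔ k (M+1) ≤ cntLE W (fc (M+1)) v) := kthSmallestVal_le_iff hfcinj hk1 hκW
        constructor
        · rw [hstep', hIcc, hlast_mem_iff (k (M+1))]
          simp only [Nat.add_sub_cancel]
          constructor
          · intro h
            exact ⟨hiff.mp hlast, Or.inr (hpass_iff.mpr (by omega))⟩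
          · rintro ⟨_, h2 | h2⟩
            · omega
            · have := hpass_iff.mp h2
              omega
        · intro hmem
          rw [hstep'] at hmem
          have hpass : k (M+1) ≤ cntLE W (fc (M+1)) v := by
            have := (hlast_mem_iff _).mp hmem
            omega
          rw [hstep', hstepc]
          ext i
          rcases Fin.eq_castSucc_or_eq_last i with ⟨j, rfl⟩ | rfl
          · rw [mem_removeKSmallest_iff hginj.injOn]
            have hjmem : j.castSucc ∈ W' ↔ j ∈ W := by
              rw [hW']
              simp [Finset.mem_union, Finset.mem_image, Fin.castSucc_inj,
                Fin.ne_of_lt (Fin.castSucc_lt_last j)]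
            have hR : (j.castSucc ∈ (removeKSmallest W (fc (M+1)) (k (M+1))).image Fin.castSucc
                ∪ {Fin.last N0})
                ↔ j ∈ removeKSmallest W (fc (M+1)) (k (M+1)) := by
              simp [Finset.mem_union, Finset.mem_image, Fin.castSucc_inj,
                Fin.ne_of_lt (Fin.castSucc_lt_last j)]
            rw [hR, mem_removeKSmallest_iff hfcinj, hjmem, hsplit (fc (M+1) j)]
            by_cases hvw : v ≤ fc (M+1) j
            · rw [if_pos hvw]
              have hne : v ≠ fc (M+1) j := by
                intro hEq
                exact Fin.ne_of_lt (Fin.castSucc_lt_last j) (hginj hEq).symm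
              have hvlt : v < fc (M+1) j := lt_of_le_of_ne hvw hne
              constructor
              · rintro ⟨hjW, _⟩
                refine ⟨hjW, ?_⟩
                have hins : insert j (W.filter (fun u => fc (M+1) u ≤ v))
                    ⊆ W.filter (fun u => fc (M+1) u ≤ fc (M+1) j) := by
                  intro u hu
                  rcases Finset.mem_insert.mp hu with rfl | hu
                  · exact Finset.mem_filter.mpr ⟨hjW, le_refl _⟩
                  · rcases Finset.mem_filter.mp hu with ⟨h1, h2⟩
                    exact Finset.mem_filter.mpr ⟨h1, le_trans h2 (le_of_lt hvlt)⟩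
                have hnotin : j ∉ W.filter (fun u => fc (M+1) u ≤ v) := by
                  intro hj
                  exact absurd (Finset.mem_filter.mp hj).2 (not_le.mpr hvlt)
                have hcard := Finset.card_le_card hins
                rw [Finset.card_insert_of_notMem hnotin] at hcard
                have : cntLE W (fc (M+1)) v + 1 ≤ cntLE W (fc (M+1)) (fc (M+1) j) := hcard
                omega
              · rintro ⟨hjW, h⟩
                exact ⟨hjW, by omega⟩
            · rw [if_neg hvw]
              simp
          · have hLmem : Fin.last N0 ∈ removeKSmallest W' (F (M+1)) (k (M+1)) := by
              rw [hlast_mem_iff]; omega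
            simp [hLmem]
      · have hnot' : Fin.last N0 ∉ removeKSmallest W' (F (M+1)) (k (M+1)) :=
          fun h => hlast (removeKSmallest_subset h)
        constructor
        · rw [hstep']
          apply iff_of_false hnot'
          rw [hIcc]
          rintro ⟨h1, _⟩
          exact hlast (hiff.mpr h1)
        · intro h
          rw [hstep'] at h
          exact absurd h hnot'

end Main

/-- The sequence `N_l` of remaining calibration sample sizes:
`N_0 = N₀` and `N_l = N_{l-1} - ⌊α (N_{l-1}+1)⌋`. -/
def conformalN (α : ℝ) (N0 : ℕ) : ℕ → ℕ
  | 0 => N0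
  | l + 1 => conformalN α N0 l - ⌊α * (conformalN α N0 l + 1)⌋₊

/-- The number of samples removed at step `l ≥ 1`: `k_l = ⌊α (N_{l-1}+1)⌋`. -/
def conformalK (α : ℝ) (N0 : ℕ) (l : ℕ) : ℕ := ⌊α * (conformalN α N0 (l - 1) + 1)⌋₊

lemma conformalK_le {α : ℝ} (hα0 : 0 < α) (hα1 : α < 1) (N0 l : ℕ) :
    conformalK α N0 (l+1) ≤ conformalN α N0 l := by
  rw [conformalK, Nat.add_sub_cancel]
  have hpos : (0:ℝ) ≤ α * (conformalN α N0 l + 1) := by positivity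
  have h2 : ⌊α * (conformalN α N0 l + 1)⌋₊ < conformalN α N0 l + 1 := by
    rw [Nat.floor_lt hpos]
    push_cast
    nlinarith [Nat.cast_nonneg (α := ℝ) (conformalN α N0 l)]
  omega

lemma conformal_sum {α : ℝ} (hα0 : 0 < α) (hα1 : α < 1) (N0 : ℕ) :
    ∀ l, conformalN α N0 l + ∑ m ∈ Finset.Icc 1 l, conformalK α N0 m = N0 := by
  intro l
  induction l with
  | zero => simp [conformalN]
  | succ l ih =>
    have hk := conformalK_le hα0 hα1 N0 l
    have hN : conformalN α N0 (l+1) = conformalN α N0 l - conformalK α N0 (l+1) := by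
      rw [conformalN, conformalK, Nat.add_sub_cancel]
    rw [Finset.sum_Icc_succ_top (by omega)]
    omega

section MeasureSec

open MeasureTheory ProbabilityTheory

variable {E : Type*} [MeasurableSpace E]

lemma measurable_filter_card {γ : Type*} [MeasurableSpace γ] {ι : Type*} (s : Finset ι)
    (p : γ → ι → Prop) [∀ x, DecidablePred (p x)] (hp : ∀ i, MeasurableSet {x | p x i}) :
    Measurable (fun x => (s.filter (p x)).card) := by
  classical
  have hrw : (fun x => (s.filter (p x)).card) = fun x => ∑ i ∈ s, if p x i then 1 else 0 := by
    funext x; rw [Finset.card_filter]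
  rw [hrw]
  apply Finset.measurable_sum
  intro i _
  exact Measurable.ite (hp i) measurable_const measurable_const

lemma measurableSet_removeKSmallest_fiber {γ : Type*} [MeasurableSpace γ] {ι : Type*}
    [LinearOrder ι] [Countable ι] (g : γ → ι → ℝ) (hg : ∀ a, Measurable (fun x => g x a))
    (s : Finset ι) (k : ℕ) (W : Finset ι) :
    MeasurableSet {x | removeKSmallest s (g x) k = W} := by
  classical
  have hc : ∀ i, Measurable (fun x =>
      (s.filter (fun j => g x j < g x i ∨ (g x j = g x i ∧ j ≤ i))).card) := by
    intro i
    apply measurable_filter_card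
    intro j
    apply MeasurableSet.union
    · exact measurableSet_lt (hg j) (hg i)
    · show MeasurableSet {x | g x j = g x i ∧ j ≤ i}
      by_cases hji : j ≤ i
      · have hset : {x | g x j = g x i ∧ j ≤ i} = {x | g x j = g x i} := by
          ext x; simp [hji]
        rw [hset]
        exact measurableSet_eq_fun (hg j) (hg i)
      · have hset : {x | g x j = g x i ∧ j ≤ i} = (∅ : Set γ) := by
          ext x; simp [hji]
        rw [hset]
        exact MeasurableSet.empty
  have hrw : {x | removeKSmallest s (g x) k = W}
      = ⋂ i : ι, {x | (i ∈ s ∧ k <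
          (s.filter (fun j => g x j < g x i ∨ (g x j = g x i ∧ j ≤ i))).card) ↔ i ∈ W} := by
    ext x
    simp only [Set.mem_iInter, Set.mem_setOf_eq, Finset.ext_iff]
    constructor
    · intro h i
      rw [← h i]
      rw [removeKSmallest, Finset.mem_filter]
    · intro h i
      rw [removeKSmallest, Finset.mem_filter]
      exact h i
  rw [hrw]
  apply MeasurableSet.iInter
  intro i
  by_cases hiW : i ∈ W <;> by_cases his : i ∈ s
  · have : {x | (i ∈ s ∧ k <
        (s.filter (fun j => g x j < g x i ∨ (g x j = g x i ∧ j ≤ i))).card) ↔ i ∈ W}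
        = {x | k < (s.filter (fun j => g x j < g x i ∨ (g x j = g x i ∧ j ≤ i))).card} := by
      ext x; simp [hiW, his]
    rw [this]
    exact (hc i) measurableSet_Ioi
  · have : {x | (i ∈ s ∧ k <
        (s.filter (fun j => g x j < g x i ∨ (g x j = g x i ∧ j ≤ i))).card) ↔ i ∈ W}
        = ∅ := by
      ext x; simp [hiW, his]
    rw [this]; exact MeasurableSet.empty
  · have : {x | (i ∈ s ∧ k <
        (s.filter (fun j => g x j < g x i ∨ (g x j = g x i ∧ j ≤ i))).card) ↔ i ∈ W}
        = {x | k < (s.filter (fun j => g x j < g x i ∨ (g x j = g x i ∧ j ≤ i))).card}ᶜ := by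
      ext x; simp [hiW, his]
    rw [this]
    exact ((hc i) measurableSet_Ioi).compl
  · have : {x | (i ∈ s ∧ k <
        (s.filter (fun j => g x j < g x i ∨ (g x j = g x i ∧ j ≤ i))).card) ↔ i ∈ W}
        = Set.univ := by
      ext x; simp [hiW, his]
    rw [this]; exact MeasurableSet.univ

lemma measurableSet_pruneSeq_fiber {n L : ℕ} (σ : ℕ → E → ℝ)
    (hσ : ∀ m ∈ Finset.Icc 1 L, Measurable (σ m)) (k : ℕ → ℕ) :
    ∀ l ≤ L, ∀ W : Finset (Fin n),
      MeasurableSet {x : Fin n → E | pruneSeq (fun m i => σ m (x i)) k l = W} := by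
  intro l
  induction l with
  | zero =>
    intro _ W
    by_cases h : (Finset.univ : Finset (Fin n)) = W
    · have : {x : Fin n → E | pruneSeq (fun m i => σ m (x i)) k 0 = W} = Set.univ := by
        ext x; simp [pruneSeq, h]
      rw [this]; exact MeasurableSet.univ
    · have : {x : Fin n → E | pruneSeq (fun m i => σ m (x i)) k 0 = W} = ∅ := by
        ext x; simp [pruneSeq, h]
      rw [this]; exact MeasurableSet.empty
  | succ l ih =>
    intro hl W
    have hrw : {x : Fin n → E | pruneSeq (fun m i => σ m (x i)) k (l+1) = W}
        = ⋃ W0 : Finset (Fin n),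
            ({x : Fin n → E | pruneSeq (fun m i => σ m (x i)) k l = W0}
              ∩ {x : Fin n → E | removeKSmallest W0 (fun i => σ (l+1) (x i)) (k (l+1)) = W}) := by
      ext x
      simp only [Set.mem_iUnion, Set.mem_inter_iff, Set.mem_setOf_eq]
      constructor
      · intro h
        refine ⟨pruneSeq (fun m i => σ m (x i)) k l, rfl, ?_⟩
        rw [pruneSeq] at h
        exact h
      · rintro ⟨W0, h1, h2⟩
        rw [pruneSeq, h1]
        exact h2
    rw [hrw]
    apply MeasurableSet.iUnion
    intro W0
    refine (ih (by omega) W0).inter ?_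
    have hma : ∀ a : Fin n, Measurable (fun x : Fin n → E => σ (l+1) (x a)) := fun a =>
      (hσ (l+1) (Finset.mem_Icc.mpr ⟨by omega, hl⟩)).comp (measurable_pi_apply a)
    exact measurableSet_removeKSmallest_fiber (γ := Fin n → E) (ι := Fin n)
      (fun x i => σ (l+1) (x i)) hma W0 (k (l+1)) W

lemma measurableSet_mem_pruneSeq {n L : ℕ} (σ : ℕ → E → ℝ)
    (hσ : ∀ m ∈ Finset.Icc 1 L, Measurable (σ m)) (k : ℕ → ℕ) (i : Fin n) :
    MeasurableSet {x : Fin n → E | i ∈ pruneSeq (fun m i => σ m (x i)) k L} := by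
  have hrw : {x : Fin n → E | i ∈ pruneSeq (fun m i => σ m (x i)) k L}
      = ⋃ (W : Finset (Fin n)) (_ : i ∈ W),
          {x : Fin n → E | pruneSeq (fun m i => σ m (x i)) k L = W} := by
    ext x
    simp only [Set.mem_iUnion, Set.mem_setOf_eq]
    constructor
    · intro h
      exact ⟨_, h, rfl⟩
    · rintro ⟨W, hW, hfib⟩
      rw [hfib]
      exact hW
  rw [hrw]
  exact MeasurableSet.iUnion fun W => MeasurableSet.iUnion fun _ =>
    measurableSet_pruneSeq_fiber σ hσ k L le_rfl W

end MeasureSec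

section MeasureSec2

open MeasureTheory ProbabilityTheory

variable {E : Type*} [MeasurableSpace E]

lemma null_eq_coord {n : ℕ} (μ : Measure E) [IsProbabilityMeasure μ] (g : E → ℝ)
    (hg : Measurable g) [NullSingletonClass (μ.map g)] {i j : Fin n} (hij : i ≠ j) :
    Measure.pi (fun _ : Fin n => μ) {x | g (x i) = g (x j)} = 0 := by
  classical
  set ν := Measure.pi (fun _ : Fin n => μ) with hν
  have hgi : Measurable (fun x : Fin n → E => g (x i)) := hg.comp (measurable_pi_apply i)
  have hgj : Measurable (fun x : Fin n → E => g (x j)) := hg.comp (measurable_pi_apply j)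
  have hh : Measurable (fun x : Fin n → E => (g (x i), g (x j))) := hgi.prodMk hgj
  have hD : MeasurableSet {p : ℝ × ℝ | p.1 = p.2} :=
    measurableSet_eq_fun measurable_fst measurable_snd
  haveI : IsProbabilityMeasure (μ.map g) := Measure.isProbabilityMeasure_map hg.aemeasurable
  have hprod : ν.map (fun x : Fin n → E => (g (x i), g (x j))) = (μ.map g).prod (μ.map g) := by
    symm
    apply Measure.prod_eq
    intro s t hs ht
    rw [Measure.map_apply hh (hs.prod ht)]
    have hpre : (fun x : Fin n → E => (g (x i), g (x j))) ⁻¹' (s ×ˢ t)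
        = Set.pi Set.univ (fun m => if m = i then g ⁻¹' s else if m = j then g ⁻¹' t else Set.univ) := by
      ext x
      simp only [Set.mem_preimage, Set.mem_prod, Set.mem_pi, Set.mem_univ, true_implies]
      have hji : ¬ (j = i) := fun h' => hij h'.symm
      constructor
      · rintro ⟨h1, h2⟩ m
        by_cases hmi : m = i
        · subst hmi; simp [h1]
        · by_cases hmj : m = j
          · subst hmj; simp [hji, h2]
          · simp [hmi, hmj]
      · intro h
        constructor
        · have hi' := h i; simpa using hi'
        · have hjj := h j
          rw [if_neg hji, if_pos rfl] at hjj
          exact hjj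
    rw [hpre, Measure.pi_pi]
    have hfi : ∀ m : Fin n, μ (if m = i then g ⁻¹' s else if m = j then g ⁻¹' t else Set.univ)
        = if m = i then μ (g ⁻¹' s) else if m = j then μ (g ⁻¹' t) else 1 := by
      intro m
      have hji : ¬ (j = i) := fun h' => hij h'.symm
      by_cases hmi : m = i
      · simp [hmi]
      · by_cases hmj : m = j
        · subst hmj; simp [hji]
        · simp [hmi, hmj]
    rw [Finset.prod_congr rfl (fun m _ => hfi m)]
    rw [← Finset.mul_prod_erase Finset.univ _ (Finset.mem_univ i)]
    rw [if_pos rfl]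
    have hj' : j ∈ Finset.univ.erase i := Finset.mem_erase.mpr ⟨Ne.symm hij, Finset.mem_univ j⟩
    rw [← Finset.mul_prod_erase _ _ hj']
    rw [if_neg (Ne.symm hij), if_pos rfl]
    have : ∀ m ∈ (Finset.univ.erase i).erase j,
        (if m = i then μ (g ⁻¹' s) else if m = j then μ (g ⁻¹' t) else 1) = 1 := by
      intro m hm
      rcases Finset.mem_erase.mp hm with ⟨hmj, hm'⟩
      rcases Finset.mem_erase.mp hm' with ⟨hmi, _⟩
      simp [hmi, hmj]
    rw [Finset.prod_congr rfl this, Finset.prod_const_one, mul_one]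
    rw [Measure.map_apply hg hs, Measure.map_apply hg ht]
  have hset : {x : Fin n → E | g (x i) = g (x j)}
      = (fun x : Fin n → E => (g (x i), g (x j))) ⁻¹' {p : ℝ × ℝ | p.1 = p.2} := rfl
  rw [hset, ← Measure.map_apply hh hD, hprod]
  rw [Measure.prod_apply hD]
  have : ∀ a : ℝ, (Prod.mk a ⁻¹' {p : ℝ × ℝ | p.1 = p.2}) = {a} := by
    intro a; ext b; simp [eq_comm]
  simp only [this]
  simp [measure_singleton]

lemma map_joint_eq_pi {Ω : Type*} [MeasurableSpace Ω] (P : Measure Ω) [IsProbabilityMeasure P]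
    {n : ℕ} (X : Fin n → Ω → E) (hXmeas : ∀ i, Measurable (X i))
    (hXindep : iIndepFun X P)
    (μ : Measure E) [IsProbabilityMeasure μ] (hXlaw : ∀ i, P.map (X i) = μ) :
    P.map (fun ω i => X i ω) = Measure.pi (fun _ : Fin n => μ) := by
  symm
  apply Measure.pi_eq
  intro s hs
  rw [Measure.map_apply (measurable_pi_lambda _ hXmeas) (MeasurableSet.univ_pi hs)]
  have hpre : (fun ω i => X i ω) ⁻¹' (Set.pi Set.univ s)
      = ⋂ i ∈ (Finset.univ : Finset (Fin n)), X i ⁻¹' (s i) := by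
    ext ω
    simp [Set.mem_pi]
  rw [hpre, hXindep.measure_inter_preimage_eq_mul Finset.univ (fun i _ => hs i)]
  apply Finset.prod_congr rfl
  intro i _
  rw [← hXlaw i, Measure.map_apply (hXmeas i) (hs i)]

lemma pi_map_perm {n : ℕ} (μ : Measure E) [IsProbabilityMeasure μ] (e : Fin n ≃ Fin n)
    {A : Set (Fin n → E)} (hA : MeasurableSet A) :
    Measure.pi (fun _ : Fin n => μ) ((fun x (i : Fin n) => x (e i)) ⁻¹' A)
      = Measure.pi (fun _ : Fin n => μ) A := by
  have h := measurePreserving_piCongrLeft (fun _ : Fin n => μ) e.symm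
  have hfun : ⇑(MeasurableEquiv.piCongrLeft (fun _ : Fin n => E) e.symm)
      = fun x (i : Fin n) => x (e i) := by
    funext x
    ext i
    simp [MeasurableEquiv.piCongrLeft, Equiv.piCongrLeft_apply_apply]
    have := Equiv.piCongrLeft_apply_apply (fun _ : Fin n => E) e.symm x (e i)
    rwa [Equiv.symm_apply_apply] at this
  rw [← hfun]
  exact h.measure_preimage hA.nullMeasurableSet

end MeasureSec2

open scoped ENNReal

/-- **Dynamic conformal beam coverage guarantee** (Proposition 2).
Given i.i.d. samples `X 1, …, X N₀, X (N₀+1)` with law `μ`, per-step scores `σ l` with atomless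
pushforwards, and the iteratively calibrated thresholds
`t_l = (k_l)`-th smallest of `σ l` on `W_{l-1}` (with `t_l = ⊥` if `k_l = 0`, where
`k_l = ⌊α(N_{l-1}+1)⌋`, `N_l = N_{l-1} - k_l`), the probability that the fresh sample passes all
`L` thresholds is exactly `1 - (Σ_{l=1}^L k_l)/(N₀+1)`. -/
theorem dynamic_conformal_beam_exact_coverage
    {Ω E : Type*} [MeasurableSpace Ω] [MeasurableSpace E]
    (P : Measure Ω) [IsProbabilityMeasure P]
    (N0 : ℕ) (hN0 : 0 < N0)
    (X : Fin (N0 + 1) → Ω → E)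
    (hXmeas : ∀ i, Measurable (X i))
    (hXindep : iIndepFun X P)
    (μ : Measure E) (hXlaw : ∀ i, P.map (X i) = μ)
    (α : ℝ) (hα : α ∈ Set.Ioo (0 : ℝ) 1)
    (L : ℕ) (hL : 0 < L)
    (σ : ℕ → E → ℝ)
    (hσmeas : ∀ l ∈ Finset.Icc 1 L, Measurable (σ l))
    (hatomless : ∀ l ∈ Finset.Icc 1 L, NoAtoms (μ.map (σ l))) :
    (P {ω | ∀ l ∈ Finset.Icc 1 L,
        (if conformalK α N0 l = 0 then (⊥ : EReal) else
          ((kthSmallestVal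
              (pruneSeq (fun m (i : Fin N0) => σ m (X i.castSucc ω)) (conformalK α N0) (l - 1))
              (fun (i : Fin N0) => σ l (X i.castSucc ω)) (conformalK α N0 l) : ℝ) : EReal))
          ≤ ((σ l (X (Fin.last N0) ω) : ℝ) : EReal)}).toReal
      = 1 - (∑ l ∈ Finset.Icc 1 L, (conformalK α N0 l : ℝ)) / (N0 + 1) := by
  classical
  obtain ⟨hα0, hα1⟩ := hα
  haveI hμprob : IsProbabilityMeasure μ := by
    rw [← hXlaw 0]; exact Measure.isProbabilityMeasure_map (hXmeas 0).aemeasurable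
  have hsum : (∑ m ∈ Finset.Icc 1 L, conformalK α N0 m) ≤ N0 := by
    have h := conformal_sum hα0 hα1 N0 L
    omega
  set ν := Measure.pi (fun _ : Fin (N0+1) => μ) with hν
  have hJmeas : Measurable (fun ω (i : Fin (N0+1)) => X i ω) := measurable_pi_lambda _ hXmeas
  have hmap : P.map (fun ω (i : Fin (N0+1)) => X i ω) = ν :=
    map_joint_eq_pi P X hXmeas hXindep μ hXlaw
  -- the generic (no-ties) set
  set G : Set (Fin (N0+1) → E) := ⋂ (l : ℕ), ⋂ (_ : l ∈ Finset.Icc 1 L), ⋂ (i : Fin (N0+1)),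
      ⋂ (j : Fin (N0+1)), ⋂ (_ : i ≠ j), {x | σ l (x i) ≠ σ l (x j)} with hGdef
  have hGmeas : MeasurableSet G := by
    refine MeasurableSet.iInter fun l => MeasurableSet.iInter fun hl =>
      MeasurableSet.iInter fun i => MeasurableSet.iInter fun j =>
      MeasurableSet.iInter fun _ => ?_
    exact (measurableSet_eq_fun ((hσmeas l hl).comp (measurable_pi_apply i))
      ((hσmeas l hl).comp (measurable_pi_apply j))).compl
  have hGmem : ∀ x, x ∈ G ↔ ∀ l ∈ Finset.Icc 1 L,
      Function.Injective (fun i : Fin (N0+1) => σ l (x i)) := by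
    intro x
    rw [hGdef]
    simp only [Set.mem_iInter, Set.mem_setOf_eq]
    constructor
    · intro h l hl a b hab
      by_contra hne
      exact h l hl a b hne hab
    · intro h l hl a b hne hEq
      exact hne (h l hl hEq)
  have hGnull : ν Gᶜ = 0 := by
    rw [hGdef]
    simp only [Set.compl_iInter]
    refine measure_iUnion_null fun l => measure_iUnion_null fun hl =>
      measure_iUnion_null fun i => measure_iUnion_null fun j =>
      measure_iUnion_null fun hij => ?_
    have hset : {x : Fin (N0+1) → E | σ l (x i) ≠ σ l (x j)}ᶜ
        = {x | σ l (x i) = σ l (x j)} := by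
      ext x; simp
    rw [hset, hν]
    haveI : NullSingletonClass (μ.map (σ l)) := hatomless l hl
    exact null_eq_coord μ (σ l) (hσmeas l hl) hij
  -- membership sets
  set C : Fin (N0+1) → Set (Fin (N0+1) → E) :=
    fun i => {x | i ∈ pruneSeq (fun m a => σ m (x a)) (conformalK α N0) L} with hCdef
  have hCmeas : ∀ i, MeasurableSet (C i) :=
    fun i => measurableSet_mem_pruneSeq σ hσmeas (conformalK α N0) i
  -- event set on the product space
  set B : Set (Fin (N0+1) → E) := {x | ∀ l ∈ Finset.Icc 1 L,
      (if conformalK α N0 l = 0 then (⊥ : EReal) else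
        ((kthSmallestVal
            (pruneSeq (fun m (i : Fin N0) => σ m (x i.castSucc)) (conformalK α N0) (l - 1))
            (fun (i : Fin N0) => σ l (x i.castSucc)) (conformalK α N0 l) : ℝ) : EReal))
        ≤ ((σ l (x (Fin.last N0)) : ℝ) : EReal)} with hBdef
  have hAB : {ω | ∀ l ∈ Finset.Icc 1 L,
      (if conformalK α N0 l = 0 then (⊥ : EReal) else
        ((kthSmallestVal
            (pruneSeq (fun m (i : Fin N0) => σ m (X i.castSucc ω)) (conformalK α N0) (l - 1))
            (fun (i : Fin N0) => σ l (X i.castSucc ω)) (conformalK α N0 l) : ℝ) : EReal))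
        ≤ ((σ l (X (Fin.last N0) ω) : ℝ) : EReal)}
      = (fun ω (i : Fin (N0+1)) => X i ω) ⁻¹' B := rfl
  -- pointwise equivalence on G
  have hBC : ∀ x ∈ G, (x ∈ B ↔ x ∈ C (Fin.last N0)) := by
    intro x hxG
    have hinjx : ∀ m ∈ Finset.Icc 1 L, Function.Injective (fun a : Fin (N0+1) => σ m (x a)) :=
      (hGmem x).mp hxG
    have hmain := (prune_main (fun m a => σ m (x a)) hinjx (conformalK α N0) hsum L le_rfl).1
    have hBiff : x ∈ B ↔ ∀ l ∈ Finset.Icc 1 L, (conformalK α N0 l = 0 ∨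
        kthSmallestVal
            (pruneSeq (fun m (i : Fin N0) => σ m (x i.castSucc)) (conformalK α N0) (l - 1))
            (fun (i : Fin N0) => σ l (x i.castSucc)) (conformalK α N0 l)
          ≤ σ l (x (Fin.last N0))) := by
      apply forall₂_congr
      intro l hl
      by_cases hkl : conformalK α N0 l = 0
      · simp [hkl]
      · rw [if_neg hkl, EReal.coe_le_coe_iff]
        constructor
        · exact Or.inr
        · rintro (h | h)
          · exact absurd h hkl
          · exact h
    rw [hBiff]
    exact hmain.symm
  -- transfer the event to the product space
  have hPnull : P ((fun ω (i : Fin (N0+1)) => X i ω) ⁻¹' Gᶜ) = 0 := by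
    rw [← Measure.map_apply hJmeas hGmeas.compl, hmap]
    exact hGnull
  have hae : ((fun ω (i : Fin (N0+1)) => X i ω) ⁻¹' B)
      =ᵐ[P] ((fun ω (i : Fin (N0+1)) => X i ω) ⁻¹' (C (Fin.last N0) ∩ G)) := by
    rw [MeasureTheory.ae_eq_set]
    constructor
    · refine measure_mono_null ?_ hPnull
      rintro ω ⟨h1, h2⟩
      simp only [Set.mem_preimage, Set.mem_compl_iff]
      intro hG'
      exact h2 ⟨(hBC _ hG').mp h1, hG'⟩
    · refine measure_mono_null ?_ hPnull
      rintro ω ⟨⟨hCx, hG'⟩, hnB⟩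
      exact absurd ((hBC _ hG').mpr hCx) hnB
  have hPA : P ((fun ω (i : Fin (N0+1)) => X i ω) ⁻¹' B) = ν (C (Fin.last N0) ∩ G) := by
    rw [measure_congr hae, ← hmap,
      Measure.map_apply hJmeas ((hCmeas _).inter hGmeas)]
  -- permutation invariance
  have hperm : ∀ i : Fin (N0+1), ν (C i ∩ G) = ν (C (Fin.last N0) ∩ G) := by
    intro i
    set e := Equiv.swap i (Fin.last N0) with he
    have hGx : ∀ x : Fin (N0+1) → E, ((fun a => x (e a)) ∈ G ↔ x ∈ G) := by
      intro x
      rw [hGmem, hGmem]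
      constructor
      · intro h l hl a b hab
        have h2 : e.symm a = e.symm b := (h l hl) (by
          show σ l (x (e (e.symm a))) = σ l (x (e (e.symm b)))
          rw [e.apply_symm_apply, e.apply_symm_apply]
          exact hab)
        exact e.symm.injective h2
      · intro h l hl
        exact (h l hl).comp e.injective
    have hpre : (fun x (a : Fin (N0+1)) => x (e a)) ⁻¹' (C (Fin.last N0) ∩ G) = C i ∩ G := by
      ext x
      simp only [Set.mem_preimage, Set.mem_inter_iff]
      constructor
      · rintro ⟨hCx, hGx'⟩
        have hxG : x ∈ G := (hGx x).mp hGx'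
        refine ⟨?_, hxG⟩
        have hinjx := (hGmem x).mp hxG
        have hequiv := pruneSeq_equiv e (fun m a => σ m (x a)) (conformalK α N0) hinjx
          L le_rfl (Fin.last N0)
        have hmem := hequiv.mp hCx
        rwa [Equiv.swap_apply_right] at hmem
      · rintro ⟨hCx, hxG⟩
        refine ⟨?_, (hGx x).mpr hxG⟩
        have hinjx := (hGmem x).mp hxG
        have hequiv := pruneSeq_equiv e (fun m a => σ m (x a)) (conformalK α N0) hinjx
          L le_rfl (Fin.last N0)
        apply hequiv.mpr
        rwa [Equiv.swap_apply_right]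
    calc ν (C i ∩ G) = ν ((fun x (a : Fin (N0+1)) => x (e a)) ⁻¹' (C (Fin.last N0) ∩ G)) := by
          rw [hpre]
    _ = ν (C (Fin.last N0) ∩ G) := by
          rw [hν]
          exact pi_map_perm μ e ((hCmeas _).inter hGmeas)
  -- counting
  have hcard : ∀ x ∈ G, (pruneSeq (fun m a => σ m (x a)) (conformalK α N0) L).card
      + ∑ m ∈ Finset.Icc 1 L, conformalK α N0 m = N0 + 1 := by
    intro x hxG
    have hinjx := (hGmem x).mp hxG
    have h := card_pruneSeq (fun m a => σ m (x a)) (conformalK α N0) L hinjx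
      (by rw [Fintype.card_fin]; omega) L le_rfl
    rwa [Fintype.card_fin] at h
  set c : ℕ := N0 + 1 - ∑ m ∈ Finset.Icc 1 L, conformalK α N0 m with hc
  have hsum_meas : ∑ i : Fin (N0+1), ν (C i ∩ G) = (c : ℝ≥0∞) * ν G := by
    have h4 : ∫⁻ x, (∑ i : Fin (N0+1), ((C i ∩ G).indicator (fun _ => (1:ℝ≥0∞))) x) ∂ν
        = ∑ i : Fin (N0+1), ν (C i ∩ G) := by
      rw [lintegral_finset_sum _
        (fun i _ => measurable_const.indicator ((hCmeas i).inter hGmeas))]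
      refine Finset.sum_congr rfl fun i _ => ?_
      rw [lintegral_indicator_const ((hCmeas i).inter hGmeas), one_mul]
    have h2 : ∀ x, (∑ i : Fin (N0+1), ((C i ∩ G).indicator (fun _ => (1:ℝ≥0∞))) x)
        = G.indicator (fun _ => (c : ℝ≥0∞)) x := by
      intro x
      by_cases hxG : x ∈ G
      · have h3 : ∀ i : Fin (N0+1), ((C i ∩ G).indicator (fun _ => (1:ℝ≥0∞))) x
            = if i ∈ pruneSeq (fun m a => σ m (x a)) (conformalK α N0) L then 1 else 0 := by
          intro i
          by_cases hiC : i ∈ pruneSeq (fun m a => σ m (x a)) (conformalK α N0) L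
          · have hxCi : x ∈ C i := hiC
            rw [Set.indicator_of_mem (Set.mem_inter hxCi hxG), if_pos hiC]
          · rw [Set.indicator_of_notMem (fun hmem => hiC hmem.1), if_neg hiC]
        rw [Finset.sum_congr rfl (fun i _ => h3 i), Finset.sum_boole,
          Set.indicator_of_mem hxG]
        rw [Finset.filter_mem_eq_inter, Finset.univ_inter]
        have := hcard x hxG
        congr 1
        omega
      · rw [Set.indicator_of_notMem hxG]
        apply Finset.sum_eq_zero
        intro i _
        exact Set.indicator_of_notMem (fun hmem => hxG hmem.2) _
    rw [← h4, lintegral_congr h2, lintegral_indicator_const hGmeas]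
  have hGone : ν G = 1 := (prob_compl_eq_zero_iff hGmeas).mp hGnull
  have hconst : ∑ i : Fin (N0+1), ν (C i ∩ G)
      = ((N0+1 : ℕ) : ℝ≥0∞) * ν (C (Fin.last N0) ∩ G) := by
    rw [Finset.sum_congr rfl (fun i _ => hperm i), Finset.sum_const, Finset.card_univ,
      Fintype.card_fin, nsmul_eq_mul]
  have hkey : ν (C (Fin.last N0) ∩ G) = (c : ℝ≥0∞) / ((N0+1 : ℕ) : ℝ≥0∞) := by
    rw [ENNReal.eq_div_iff (by exact_mod_cast Nat.succ_ne_zero N0) (ENNReal.natCast_ne_top _)]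
    rw [← hconst, hsum_meas, hGone, mul_one]
  rw [hAB, hPA, hkey, ENNReal.toReal_div, ENNReal.toReal_natCast, ENNReal.toReal_natCast]
  have hcast : (c : ℝ) = ((N0:ℝ) + 1) - ∑ l ∈ Finset.Icc 1 L, (conformalK α N0 l : ℝ) := by
    rw [hc, Nat.cast_sub (by omega)]
    push_cast
    ring
  rw [hcast]
  have hne : ((N0:ℝ) + 1) ≠ 0 := by positivity
  push_cast
  field_simp

end
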